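/- In the ring of formal power series ℤ[[x, y]] in two variables, for integers m, n, k, i, j with m, n ≥ 0, 0 ≤ k ≤ min(m, n), i, j ≥ 0 and i+j ≥ k, the coefficient of x^j y^i in the series (x+y)^{i+j−k} · (1−x)^{−(m−k+1)} · (1+y)^{−(n−k+1)} (where the inverses exist since 1−x and 1+y are units in ℤ[[x, y]]) equals c_{m,n,k}(i, j). -/

import Mathlib

/-- Binomial coefficient for integer arguments: `C a b = a.choose b` when
`0 ≤ b ≤ a`, and `0` otherwise. -/
def C (a b : ℤ) : ℤ := if 0 ≤ b ∧ b ≤ a then (a.toNat.choose b.toNat : ℤ) else 0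

/-- The coordinate function `c_{m,n,k}(i,j)`. -/
def c (m n k i j : ℤ) : ℤ :=
  ∑ l ∈ Finset.range (k.toNat + 1),
    (-1 : ℤ) ^ l * C (i + j - k) (i - l) * C (m - l) (k - l) * C (n - k + l) l

section Aux

open MvPowerSeries Finsupp

lemma C_eq_zero {a b : ℤ} (h : b < 0 ∨ a < b) : _root_.C a b = 0 := by
  unfold _root_.C; rw [if_neg]; omega

lemma C_eq {a b : ℤ} (h1 : 0 ≤ b) (h2 : b ≤ a) : _root_.C a b = (a.toNat.choose b.toNat : ℤ) := by
  unfold _root_.C; rw [if_pos ⟨h1, h2⟩]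

def Faux (m n k i j : ℤ) (s : ℤ) : ℤ :=
  (-1 : ℤ) ^ (s - j).toNat * C (i + j - k) (i - (s - j)) * C (m - (s - j)) (k - (s - j)) *
    C (n - k + (s - j)) (s - j)

lemma comb (m n k i j : ℤ)
    (hm : 0 ≤ m) (hn : 0 ≤ n) (hk0 : 0 ≤ k) (hkm : k ≤ m) (hkn : k ≤ n)
    (hi : 0 ≤ i) (hj : 0 ≤ j) (hij : k ≤ i + j) :
    (∑ a ∈ Finset.range ((i + j - k).toNat + 1),
      if a ≤ j.toNat ∧ (i + j - k).toNat - a ≤ i.toNat then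
        (((i + j - k).toNat.choose a : ℤ)) *
          ((((m - k).toNat + (j.toNat - a)).choose (j.toNat - a) : ℤ) *
            ((-1 : ℤ) ^ (i.toNat - ((i + j - k).toNat - a)) *
              (((n - k).toNat + (i.toNat - ((i + j - k).toNat - a))).choose
                (i.toNat - ((i + j - k).toNat - a)) : ℤ)))
      else 0) = c m n k i j := by
  set N := (i + j - k).toNat with hN
  set i' := i.toNat
  set j' := j.toNat
  set k' := k.toNat
  -- Step A : LHS = ∑ s in Icc k (i+j), Faux m n k i j s
  have stepA : (∑ a ∈ Finset.range (N + 1),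
      if a ≤ j' ∧ N - a ≤ i' then
        ((N.choose a : ℤ)) *
          ((((m - k).toNat + (j' - a)).choose (j' - a) : ℤ) *
            ((-1 : ℤ) ^ (i' - (N - a)) *
              (((n - k).toNat + (i' - (N - a))).choose (i' - (N - a)) : ℤ)))
      else 0) = ∑ s ∈ Finset.Icc k (i + j), Faux m n k i j s := by
    refine Finset.sum_nbij' (fun a => k + (a : ℤ)) (fun s => (s - k).toNat) ?_ ?_ ?_ ?_ ?_
    · intro a ha
      rw [Finset.mem_range] at ha
      rw [Finset.mem_Icc]
      omega
    · intro s hs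
      rw [Finset.mem_Icc] at hs
      rw [Finset.mem_range]
      omega
    · intro a _; omega
    · intro s hs; rw [Finset.mem_Icc] at hs; omega
    · intro a ha
      rw [Finset.mem_range] at ha
      by_cases hcond : a ≤ j' ∧ N - a ≤ i'
      · rw [if_pos hcond]
        obtain ⟨h1, h2⟩ := hcond
        unfold Faux
        have e1 : C (i + j - k) (i - (k + (a : ℤ) - j)) = ((N.choose a : ℤ)) := by
          rw [C_eq (by omega) (by omega)]
          have : (i - (k + (a : ℤ) - j)).toNat = N - a := by omega
          rw [this, ← hN]
          rw [Nat.choose_symm (by omega)]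
        have e2 : C (m - (k + (a : ℤ) - j)) (k - (k + (a : ℤ) - j)) =
            ((((m - k).toNat + (j' - a)).choose (j' - a) : ℤ)) := by
          rw [C_eq (by omega) (by omega)]
          have ea : (m - (k + (a : ℤ) - j)).toNat = (m - k).toNat + (j' - a) := by omega
          have eb : (k - (k + (a : ℤ) - j)).toNat = j' - a := by omega
          rw [ea, eb]
        have e3 : C (n - k + (k + (a : ℤ) - j)) (k + (a : ℤ) - j) =
            ((((n - k).toNat + (i' - (N - a))).choose (i' - (N - a)) : ℤ)) := by
          rw [C_eq (by omega) (by omega)]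
          have ea : (n - k + (k + (a : ℤ) - j)).toNat = (n - k).toNat + (i' - (N - a)) := by
            omega
          have eb : (k + (a : ℤ) - j).toNat = i' - (N - a) := by omega
          rw [ea, eb]
        have e4 : (k + (a : ℤ) - j).toNat = i' - (N - a) := by omega
        rw [e1, e2, e3, e4]
        ring
      · rw [if_neg hcond]
        unfold Faux
        rcases not_and_or.mp hcond with h1 | h2
        · have : C (m - (k + (a : ℤ) - j)) (k - (k + (a : ℤ) - j)) = 0 :=
            C_eq_zero (by left; omega)
          rw [this]; ring
        · have : C (n - k + (k + (a : ℤ) - j)) (k + (a : ℤ) - j) = 0 :=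
            C_eq_zero (by left; omega)
          rw [this]; ring
  -- Step B : c = ∑ s in Icc j (j+k), Faux
  have stepB : c m n k i j = ∑ s ∈ Finset.Icc j (j + k), Faux m n k i j s := by
    unfold c
    refine Finset.sum_nbij' (fun l => j + (l : ℤ)) (fun s => (s - j).toNat) ?_ ?_ ?_ ?_ ?_
    · intro l hl; rw [Finset.mem_range] at hl; rw [Finset.mem_Icc]; omega
    · intro s hs; rw [Finset.mem_Icc] at hs; rw [Finset.mem_range]; omega
    · intro l _; omega
    · intro s hs; rw [Finset.mem_Icc] at hs; omega
    · intro l _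
      unfold Faux
      have e : j + (l : ℤ) - j = (l : ℤ) := by ring
      rw [e, Int.toNat_natCast]
  -- Step C : the two Icc sums agree
  have big1 : ∑ s ∈ Finset.Icc k (i + j), Faux m n k i j s
      = ∑ s ∈ Finset.Icc 0 (i + j + k), Faux m n k i j s := by
    refine Finset.sum_subset ?_ ?_
    · intro x hx; rw [Finset.mem_Icc] at *; omega
    · intro x hx hnx
      rw [Finset.mem_Icc] at hx
      rw [Finset.mem_Icc] at hnx
      unfold Faux
      rcases (by omega : x < k ∨ i + j < x) with h | h
      · have : C (i + j - k) (i - (x - j)) = 0 := C_eq_zero (by right; omega)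
        rw [this]; ring
      · have : C (i + j - k) (i - (x - j)) = 0 := C_eq_zero (by left; omega)
        rw [this]; ring
  have big2 : ∑ s ∈ Finset.Icc j (j + k), Faux m n k i j s
      = ∑ s ∈ Finset.Icc 0 (i + j + k), Faux m n k i j s := by
    refine Finset.sum_subset ?_ ?_
    · intro x hx; rw [Finset.mem_Icc] at *; omega
    · intro x hx hnx
      rw [Finset.mem_Icc] at hx
      rw [Finset.mem_Icc] at hnx
      unfold Faux
      rcases (by omega : x < j ∨ j + k < x) with h | h
      · have : C (n - k + (x - j)) (x - j) = 0 := C_eq_zero (by left; omega)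
        rw [this]; ring
      · have : C (m - (x - j)) (k - (x - j)) = 0 := C_eq_zero (by left; omega)
        rw [this]; ring
  rw [stepA, stepB, big1, big2]




lemma axis_iff (d : Fin 2 →₀ ℕ) (s : Fin 2) :
    d = Finsupp.single s (d s) ↔ ∀ t, t ≠ s → d t = 0 := by
  constructor
  · intro h t ht
    conv_lhs => rw [h]
    simp [Finsupp.single_apply, Ne.symm ht]
  · intro h
    ext t
    by_cases hts : t = s
    · subst hts; simp
    · rw [h t hts]; simp [Finsupp.single_apply, Ne.symm hts]

noncomputable def myG (s : Fin 2) (r : ℤ) (M : ℕ) : MvPowerSeries (Fin 2) ℤ :=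
  fun d => if d = Finsupp.single s (d s) then r ^ (d s) * ((M + d s).choose (d s) : ℤ) else 0

lemma coeff_myG (s : Fin 2) (r : ℤ) (M : ℕ) (d : Fin 2 →₀ ℕ) :
    coeff (R := ℤ) d (myG s r M) =
      if d = Finsupp.single s (d s) then r ^ (d s) * ((M + d s).choose (d s) : ℤ) else 0 := rfl

lemma coeff_myG_single (s : Fin 2) (r : ℤ) (M : ℕ) (q : ℕ) :
    coeff (R := ℤ) (Finsupp.single s q) (myG s r M) = r ^ q * ((M + q).choose q : ℤ) := by
  rw [coeff_myG]; simp

lemma coeff_myG_off (s : Fin 2) (r : ℤ) (M : ℕ) (d : Fin 2 →₀ ℕ)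
    (h : d ≠ Finsupp.single s (d s)) : coeff (R := ℤ) d (myG s r M) = 0 := by
  rw [coeff_myG, if_neg h]

lemma hC (r : ℤ) : MvPowerSeries.C (σ := Fin 2) (R := ℤ) r = monomial (R := ℤ) (0 : Fin 2 →₀ ℕ) r := rfl

lemma coeff_one_sub_mul (s : Fin 2) (r : ℤ) (f : MvPowerSeries (Fin 2) ℤ) (d : Fin 2 →₀ ℕ) :
    coeff (R := ℤ) d ((1 - MvPowerSeries.C (σ := Fin 2) (R := ℤ) r * X s) * f) =
      coeff (R := ℤ) d f -
        (if Finsupp.single s 1 ≤ d then r * coeff (R := ℤ) (d - Finsupp.single s 1) f else 0) := by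
  rw [sub_mul, one_mul, map_sub]
  congr 1
  rw [hC, X, MvPowerSeries.monomial_mul_monomial, mul_one, zero_add, coeff_monomial_mul]

lemma sub_single_off (d : Fin 2 →₀ ℕ) (s : Fin 2) (h : d ≠ Finsupp.single s (d s)) :
    d - Finsupp.single s 1 ≠ Finsupp.single s (((d - Finsupp.single s 1) : Fin 2 →₀ ℕ) s) := by
  rw [Ne, axis_iff] at h
  push_neg at h
  obtain ⟨t, hts, ht⟩ := h
  intro hEq
  have h2 := (axis_iff _ s).mp hEq t hts
  rw [Finsupp.tsub_apply, Finsupp.single_apply, if_neg (Ne.symm hts), Nat.sub_zero] at h2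
  exact ht h2

lemma single_sub_single (s : Fin 2) (q : ℕ) :
    Finsupp.single s q - Finsupp.single s 1 = Finsupp.single s (q - 1) := by
  ext t
  rw [Finsupp.tsub_apply]
  by_cases hts : t = s
  · subst hts; simp
  · simp [Finsupp.single_apply, Ne.symm hts]

lemma mul_myG_succ (s : Fin 2) (r : ℤ) (M : ℕ) :
    (1 - MvPowerSeries.C (σ := Fin 2) (R := ℤ) r * X s) * myG s r (M + 1) = myG s r M := by
  ext d
  rw [coeff_one_sub_mul]
  by_cases hax : d = Finsupp.single s (d s)
  · rw [hax]
    generalize d s = q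
    rcases Nat.eq_zero_or_pos q with hq | hq
    · subst hq
      rw [coeff_myG_single, coeff_myG_single, if_neg]
      · simp
      · rw [Finsupp.single_le_iff, Finsupp.single_eq_same]; omega
    · obtain ⟨q', rfl⟩ : ∃ q', q = q' + 1 := ⟨q - 1, by omega⟩
      rw [if_pos (by rw [Finsupp.single_le_iff, Finsupp.single_eq_same]; omega)]
      rw [single_sub_single, Nat.add_sub_cancel]
      rw [coeff_myG_single, coeff_myG_single, coeff_myG_single]
      have hp : (M + 1 + (q' + 1)).choose (q' + 1)
          = (M + (q' + 1)).choose (q' + 1) + (M + (q' + 1)).choose q' := by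
        have : M + 1 + (q' + 1) = (M + q' + 1) + 1 := by omega
        rw [this, Nat.choose_succ_succ (M + q' + 1) q']
        have : M + (q' + 1) = M + q' + 1 := by omega
        rw [this]
        ring
      rw [hp]
      push_cast
      ring
  · rw [coeff_myG_off _ _ _ _ hax, coeff_myG_off _ _ _ _ hax]
    by_cases hle : Finsupp.single s 1 ≤ d
    · rw [if_pos hle, coeff_myG_off _ _ _ _ (sub_single_off d s hax)]
      ring
    · rw [if_neg hle]; ring

lemma mul_myG_zero (s : Fin 2) (r : ℤ) :
    (1 - MvPowerSeries.C (σ := Fin 2) (R := ℤ) r * X s) * myG s r 0 = 1 := by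
  ext d
  rw [coeff_one_sub_mul]
  by_cases hax : d = Finsupp.single s (d s)
  · rw [hax]
    generalize d s = q
    rcases Nat.eq_zero_or_pos q with hq | hq
    · subst hq
      rw [coeff_myG_single, if_neg]
      · simp
      · rw [Finsupp.single_le_iff, Finsupp.single_eq_same]; omega
    · obtain ⟨q', rfl⟩ : ∃ q', q = q' + 1 := ⟨q - 1, by omega⟩
      rw [if_pos (by rw [Finsupp.single_le_iff, Finsupp.single_eq_same]; omega)]
      rw [single_sub_single, Nat.add_sub_cancel]
      rw [coeff_myG_single, coeff_myG_single, MvPowerSeries.coeff_one,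
        if_neg (by simp [Finsupp.single_eq_zero])]
      simp [pow_succ]
      ring
  · have hd0 : d ≠ 0 := by
      intro h; exact hax (by rw [h]; simp)
    rw [coeff_myG_off _ _ _ _ hax, MvPowerSeries.coeff_one, if_neg hd0]
    by_cases hle : Finsupp.single s 1 ≤ d
    · rw [if_pos hle, coeff_myG_off _ _ _ _ (sub_single_off d s hax)]
      ring
    · rw [if_neg hle]; ring

lemma pow_mul_myG (s : Fin 2) (r : ℤ) (M : ℕ) :
    (1 - MvPowerSeries.C (σ := Fin 2) (R := ℤ) r * X s) ^ (M + 1) * myG s r M = 1 := by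
  induction M with
  | zero => rw [pow_one, mul_myG_zero]
  | succ M ih =>
      calc (1 - MvPowerSeries.C (σ := Fin 2) (R := ℤ) r * X s) ^ (M + 1 + 1) * myG s r (M + 1)
          = (1 - MvPowerSeries.C (σ := Fin 2) (R := ℤ) r * X s) ^ (M + 1) *
            ((1 - MvPowerSeries.C (σ := Fin 2) (R := ℤ) r * X s) * myG s r (M + 1)) := by rw [pow_succ]; ring
        _ = 1 := by rw [mul_myG_succ]; exact ih

lemma invOfUnit_pow (s : Fin 2) (r : ℤ) (M : ℕ) :
    (1 - MvPowerSeries.C (σ := Fin 2) (R := ℤ) r * X s).invOfUnit 1 ^ (M + 1) = myG s r M := by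
  have hc : constantCoeff (σ := Fin 2) (R := ℤ) (1 - MvPowerSeries.C (σ := Fin 2) (R := ℤ) r * X s) = (1 : ℤˣ) := by
    simp
  have h1 : (1 - MvPowerSeries.C (σ := Fin 2) (R := ℤ) r * X s) *
      (1 - MvPowerSeries.C (σ := Fin 2) (R := ℤ) r * X s).invOfUnit 1 = 1 :=
    MvPowerSeries.mul_invOfUnit _ 1 hc
  calc (1 - MvPowerSeries.C (σ := Fin 2) (R := ℤ) r * X s).invOfUnit 1 ^ (M + 1)
      = (1 - MvPowerSeries.C (σ := Fin 2) (R := ℤ) r * X s).invOfUnit 1 ^ (M + 1) *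
        ((1 - MvPowerSeries.C (σ := Fin 2) (R := ℤ) r * X s) ^ (M + 1) * myG s r M) := by
        rw [pow_mul_myG, mul_one]
    _ = ((1 - MvPowerSeries.C (σ := Fin 2) (R := ℤ) r * X s) *
        (1 - MvPowerSeries.C (σ := Fin 2) (R := ℤ) r * X s).invOfUnit 1) ^ (M + 1) * myG s r M := by
        rw [mul_pow]; ring
    _ = myG s r M := by rw [h1, one_pow, one_mul]

lemma decomp (d : Fin 2 →₀ ℕ) : d = Finsupp.single 0 (d 0) + Finsupp.single 1 (d 1) := by
  ext t
  fin_cases t <;> simp [Finsupp.single_apply]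

lemma pair_apply_0 (a b : ℕ) :
    ((Finsupp.single (0 : Fin 2) a + Finsupp.single 1 b) : Fin 2 →₀ ℕ) 0 = a := by
  simp [Finsupp.single_apply]

lemma pair_apply_1 (a b : ℕ) :
    ((Finsupp.single (0 : Fin 2) a + Finsupp.single 1 b) : Fin 2 →₀ ℕ) 1 = b := by
  simp [Finsupp.single_apply]

lemma pair_le (a b u v : ℕ) :
    (Finsupp.single (0 : Fin 2) a + Finsupp.single 1 b) ≤
      (Finsupp.single 0 u + Finsupp.single 1 v) ↔ a ≤ u ∧ b ≤ v := by
  rw [Finsupp.le_def]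
  constructor
  · intro h
    constructor
    · have := h 0; rwa [pair_apply_0, pair_apply_0] at this
    · have := h 1; rwa [pair_apply_1, pair_apply_1] at this
  · rintro ⟨h1, h2⟩ t
    fin_cases t <;> simp [Finsupp.single_apply] <;> assumption

lemma pair_sub (a b u v : ℕ) :
    (Finsupp.single (0 : Fin 2) u + Finsupp.single 1 v) -
      (Finsupp.single 0 a + Finsupp.single 1 b) =
      (Finsupp.single 0 (u - a) + Finsupp.single 1 (v - b)) := by
  ext t
  rw [Finsupp.tsub_apply]
  fin_cases t <;> simp [Finsupp.single_apply]

lemma myG_mul_myG (M1 M2 : ℕ) (d : Fin 2 →₀ ℕ) :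
    coeff (R := ℤ) d (myG 0 1 M1 * myG 1 (-1) M2) =
      ((M1 + d 0).choose (d 0) : ℤ) *
        ((-1 : ℤ) ^ (d 1) * ((M2 + d 1).choose (d 1) : ℤ)) := by
  classical
  rw [MvPowerSeries.coeff_mul]
  rw [Finset.sum_eq_single ((Finsupp.single 0 (d 0), Finsupp.single 1 (d 1)) :
      (Fin 2 →₀ ℕ) × (Fin 2 →₀ ℕ))]
  · rw [coeff_myG_single, coeff_myG_single, one_pow, one_mul]
  · rintro ⟨p1, p2⟩ hp hne
    simp only at *
    by_cases h1 : p1 = Finsupp.single 0 (p1 0)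
    · by_cases h2 : p2 = Finsupp.single 1 (p2 1)
      · exfalso
        apply hne
        have hadd := Finset.HasAntidiagonal.mem_antidiagonal.mp hp
        have e1 : p1 1 = 0 := (axis_iff p1 0).mp h1 1 (by decide)
        have e0 : p2 0 = 0 := (axis_iff p2 1).mp h2 0 (by decide)
        have hd0 : p1 0 = d 0 := by
          rw [← hadd, Finsupp.add_apply, e0, add_zero]
        have hd1 : p2 1 = d 1 := by
          rw [← hadd, Finsupp.add_apply, e1, zero_add]
        rw [Prod.ext_iff]
        constructor
        · rw [← hd0]; exact h1
        · rw [← hd1]; exact h2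
      · rw [coeff_myG_off 1 (-1) M2 _ h2, mul_zero]
    · rw [coeff_myG_off 0 1 M1 _ h1, zero_mul]
  · intro hnot
    exact absurd (Finset.HasAntidiagonal.mem_antidiagonal.mpr (decomp d).symm) hnot

lemma expand_pow (N : ℕ) : (X 0 + X 1 : MvPowerSeries (Fin 2) ℤ) ^ N =
    ∑ a ∈ Finset.range (N + 1),
      monomial (R := ℤ) (Finsupp.single 0 a + Finsupp.single 1 (N - a)) ((N.choose a : ℤ)) := by
  rw [add_pow]
  refine Finset.sum_congr rfl fun a _ => ?_
  rw [X_pow_eq, X_pow_eq, MvPowerSeries.monomial_mul_monomial, one_mul]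
  have hcast : ((N.choose a : ℕ) : MvPowerSeries (Fin 2) ℤ) =
      MvPowerSeries.C (σ := Fin 2) (R := ℤ) ((N.choose a : ℤ)) :=
    (map_natCast (MvPowerSeries.C (σ := Fin 2) (R := ℤ)) (N.choose a)).symm
  rw [hcast, hC, MvPowerSeries.monomial_mul_monomial, one_mul, add_zero]

lemma key_coeff (M1 M2 N i' j' : ℕ) :
    coeff (R := ℤ) (Finsupp.single 0 j' + Finsupp.single 1 i')
      ((X 0 + X 1 : MvPowerSeries (Fin 2) ℤ) ^ N * (myG 0 1 M1 * myG 1 (-1) M2)) =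
    ∑ a ∈ Finset.range (N + 1),
      if a ≤ j' ∧ N - a ≤ i' then
        (N.choose a : ℤ) * (((M1 + (j' - a)).choose (j' - a) : ℤ) *
          ((-1 : ℤ) ^ (i' - (N - a)) * ((M2 + (i' - (N - a))).choose (i' - (N - a)) : ℤ)))
      else 0 := by
  rw [expand_pow, Finset.sum_mul, map_sum]
  refine Finset.sum_congr rfl fun a _ => ?_
  rw [MvPowerSeries.coeff_monomial_mul]
  by_cases hle : a ≤ j' ∧ N - a ≤ i'
  · rw [if_pos ((pair_le a (N - a) j' i').mpr hle), if_pos hle, pair_sub, myG_mul_myG,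
      pair_apply_0, pair_apply_1]
  · rw [if_neg (fun hc => hle ((pair_le a (N - a) j' i').mp hc)), if_neg hle]


end Aux

open MvPowerSeries in
theorem generating_function_for_weight_vectors (m n k i j : ℤ)
    (hm : 0 ≤ m) (hn : 0 ≤ n) (hk0 : 0 ≤ k) (hkm : k ≤ m) (hkn : k ≤ n)
    (hi : 0 ≤ i) (hj : 0 ≤ j) (hij : k ≤ i + j) :
    MvPowerSeries.coeff (R := ℤ) (Finsupp.single 0 j.toNat + Finsupp.single 1 i.toNat)
      ((X 0 + X 1 : MvPowerSeries (Fin 2) ℤ) ^ (i + j - k).toNat *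
        ((1 - X 0 : MvPowerSeries (Fin 2) ℤ).invOfUnit 1) ^ (m - k + 1).toNat *
        ((1 + X 1 : MvPowerSeries (Fin 2) ℤ).invOfUnit 1) ^ (n - k + 1).toNat) =
    c m n k i j := by
  have hM1 : (m - k + 1).toNat = (m - k).toNat + 1 := by omega
  have hM2 : (n - k + 1).toNat = (n - k).toNat + 1 := by omega
  have h10 : (1 - X 0 : MvPowerSeries (Fin 2) ℤ) =
      1 - MvPowerSeries.C (σ := Fin 2) (R := ℤ) 1 * X 0 := by
    rw [map_one, one_mul]
  have h11 : (1 + X 1 : MvPowerSeries (Fin 2) ℤ) =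
      1 - MvPowerSeries.C (σ := Fin 2) (R := ℤ) (-1) * X 1 := by
    rw [map_neg, map_one, neg_one_mul, sub_neg_eq_add]
  rw [hM1, hM2, h10, h11, invOfUnit_pow, invOfUnit_pow, mul_assoc, key_coeff]
  exact comb m n k i j hm hn hk0 hkm hkn hi hj hij
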